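/- arXiv:2208.09928 — 4 statements merged into one kernel-verified Lean document; each statement's English description precedes it below -/
import Mathlib

section
/- For every s ∈ ℝ and every integer n ≥ 1, the polynomial P_n^s factors as P_n^s(x) = (n!)^{-s} · x · ∏_{k=1}^{n-1} (x + k^s). In particular P_n^s is real-rooted with all roots ≤ 0. -/
open Finset Polynomial MeasureTheory Filter

/-- The polynomials `Pₙˢ`, defined by `P₀ˢ = 1` and
`Pₙˢ(x) = (x / nˢ) · ∑_{k=0}^{n-1} Pₖˢ(x)` for `n ≥ 1`. -/
noncomputable def Pp (s : ℝ) : ℕ → Polynomial ℝ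
  | 0 => 1
  | n + 1 => Polynomial.C ((((n + 1 : ℕ)) : ℝ) ^ s)⁻¹ * Polynomial.X *
      ∑ k ∈ (Finset.range (n + 1)).attach, Pp s k.1
  decreasing_by exact Finset.mem_range.mp k.2

/-- `A_{n,k}(s)` : the coefficient of `x^k` in `Pₙˢ(x)`. -/
noncomputable def A (n k : ℕ) (s : ℝ) : ℝ := (Pp s n).coeff k

lemma Pp_succ (s : ℝ) (n : ℕ) :
    Pp s (n + 1) = Polynomial.C ((((n + 1 : ℕ)) : ℝ) ^ s)⁻¹ * Polynomial.X *
      ∑ k ∈ Finset.range (n + 1), Pp s k := by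
  rw [Pp]
  congr 1
  exact Finset.sum_attach _ _

lemma Icc_one_succ (m : ℕ) : Finset.Icc 1 (m + 1) = insert (m + 1) (Finset.Icc 1 m) := by
  ext x
  simp only [Finset.mem_Icc, Finset.mem_insert]
  omega

lemma sum_Pp (s : ℝ) (n : ℕ) :
    ∑ k ∈ Finset.range (n + 1), Pp s k =
      Polynomial.C (∏ k ∈ Finset.Icc 1 n, (((k : ℝ)) ^ s)⁻¹) *
      ∏ k ∈ Finset.Icc 1 n, (Polynomial.X + Polynomial.C ((k : ℝ) ^ s)) := by
  induction n with
  | zero => simp [Pp]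
  | succ m ih =>
    have hmem : m + 1 ∉ Finset.Icc 1 m := by simp
    have hne : (((m + 1 : ℕ)) : ℝ) ^ s ≠ 0 := by positivity
    have key : Polynomial.C ((((m + 1 : ℕ)) : ℝ) ^ s)⁻¹ *
        Polynomial.C ((((m + 1 : ℕ)) : ℝ) ^ s) = 1 := by
      rw [← Polynomial.C_mul, inv_mul_cancel₀ hne, Polynomial.C_1]
    rw [Finset.sum_range_succ, ih, Pp_succ, ih, Icc_one_succ m,
      Finset.prod_insert hmem, Finset.prod_insert hmem, Polynomial.C_mul]
    linear_combination (- Polynomial.C (∏ k ∈ Finset.Icc 1 m, (((k : ℝ)) ^ s)⁻¹) *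
      ∏ k ∈ Finset.Icc 1 m, (Polynomial.X + Polynomial.C ((k : ℝ) ^ s))) * key

lemma factorial_rpow (s : ℝ) (n : ℕ) :
    ((n.factorial : ℝ)) ^ (-s) = ∏ k ∈ Finset.Icc 1 n, (((k : ℝ)) ^ s)⁻¹ := by
  induction n with
  | zero => simp [Real.rpow_natCast]
  | succ m ih =>
    rw [Icc_one_succ, Finset.prod_insert (by simp), ← ih, Nat.factorial_succ]
    push_cast
    rw [Real.mul_rpow (by positivity) (by positivity), Real.rpow_neg (by positivity)]

/-- For every `s ∈ ℝ` and `n ≥ 1`, `Pₙˢ(x) = (n!)^{-s} · x · ∏_{k=1}^{n-1} (x + kˢ)`;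
in particular `Pₙˢ` is real-rooted with all roots `≤ 0`. -/
theorem factorization_and_real_rooted (s : ℝ) (n : ℕ) (hn : 1 ≤ n) :
    Pp s n = Polynomial.C ((n.factorial : ℝ) ^ (-s)) *
      (Polynomial.X *
        ∏ k ∈ Finset.Icc 1 (n - 1), (Polynomial.X + Polynomial.C ((k : ℝ) ^ s))) ∧
    ∀ z : ℂ, ((Pp s n).map (algebraMap ℝ ℂ)).IsRoot z → ∃ r : ℝ, r ≤ 0 ∧ z = (r : ℂ) := by
  obtain ⟨m, rfl⟩ : ∃ m, n = m + 1 := ⟨n - 1, by omega⟩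
  have hfac : Pp s (m + 1) = Polynomial.C (((m + 1).factorial : ℝ) ^ (-s)) *
      (Polynomial.X *
        ∏ k ∈ Finset.Icc 1 (m + 1 - 1), (Polynomial.X + Polynomial.C ((k : ℝ) ^ s))) := by
    rw [Pp_succ, sum_Pp, factorial_rpow]
    rw [Icc_one_succ, Finset.prod_insert (by simp), Polynomial.C_mul]
    simp only [Nat.add_sub_cancel]
    ring
  refine ⟨hfac, fun z hz => ?_⟩
  rw [hfac] at hz
  simp only [Polynomial.IsRoot, Polynomial.eval_map, Polynomial.eval₂_mul,
    Polynomial.eval₂_C, Polynomial.eval₂_X, Polynomial.eval₂_finset_prod,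
    Polynomial.eval₂_add] at hz
  have hC : (algebraMap ℝ ℂ) (((m + 1).factorial : ℝ) ^ (-s)) ≠ 0 := by
    simp only [Complex.coe_algebraMap, ne_eq, Complex.ofReal_eq_zero]
    positivity
  rcases mul_eq_zero.mp hz with h | h
  · exact absurd h hC
  rcases mul_eq_zero.mp h with h | h
  · exact ⟨0, le_refl 0, by simp [h]⟩
  · obtain ⟨k, hk, hk0⟩ := Finset.prod_eq_zero_iff.mp h
    refine ⟨-((k : ℝ) ^ s), neg_nonpos.mpr (Real.rpow_nonneg (Nat.cast_nonneg k) s), ?_⟩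
    rw [add_eq_zero_iff_eq_neg] at hk0
    simp only [hk0, Complex.coe_algebraMap, Complex.ofReal_neg]
end

section
/- For every integer n ≥ 1 and every integer k with 0 ≤ k ≤ n, one has A_{n,k}(1) = c(n,k)/n!, where c(n,k) denotes the unsigned Stirling number of the first kind, i.e. the number of permutations of an n-element set with exactly k cycles. -/
open Finset Polynomial MeasureTheory Filter

/-- The number of cycles (orbits, including fixed points) of a permutation of `Fin n`. -/
noncomputable def cycleCount (n : ℕ) (σ : Equiv.Perm (Fin n)) : ℕ :=
  σ.cycleType.card + (n - σ.support.card)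

/-- The unsigned Stirling number of the first kind: the number of permutations of an
`n`-element set with exactly `k` cycles. -/
noncomputable def stirling1 (n k : ℕ) : ℕ :=
  Nat.card {σ : Equiv.Perm (Fin n) // cycleCount n σ = k}

section Helpers

open Equiv Equiv.Perm

variable {α : Type*} [DecidableEq α] [Fintype α]

/-- Joining a fixed point `a` into the cycle of `b`: `swap a b * cycleOf τ b` is a cycle
whose support is the support of the cycle together with `a`. -/
lemma swap_mul_cycleOf_isCycle {τ : Equiv.Perm α} {a b : α} (hab : a ≠ b) (ha : τ a = a)
    (hb : τ b ≠ b) :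
    (Equiv.swap a b * τ.cycleOf b).IsCycle ∧
      (Equiv.swap a b * τ.cycleOf b).support = insert a (τ.cycleOf b).support := by
  classical
  set l := τ.toList b with hl
  have hnd : l.Nodup := Equiv.Perm.nodup_toList τ b
  have hbs : b ∈ τ.support := Equiv.Perm.mem_support.2 hb
  have hlen : 2 ≤ l.length := Equiv.Perm.two_le_length_toList_iff_mem_support.mpr hbs
  have hform : l.formPerm = τ.cycleOf b := Equiv.Perm.formPerm_toList τ b
  have hanl : a ∉ l := by
    intro hal
    have h1 : l.formPerm a ≠ a :=
      (List.formPerm_apply_mem_ne_self_iff _ hnd _ hal).mpr hlen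
    have h2 : Equiv.Perm.SameCycle τ b a := (Equiv.Perm.mem_toList_iff.mp hal).1
    have h3 : τ.cycleOf b a = a := by
      rw [h2.cycleOf_apply, ha]
    rw [hform, h3] at h1
    exact h1 rfl
  -- l = b :: t for some t
  obtain ⟨t, hxt⟩ : ∃ t', l = b :: t' := by
    have hlc : l.length = (τ.cycleOf b).support.card := Equiv.Perm.length_toList τ b
    obtain ⟨m, hm⟩ : ∃ m, (τ.cycleOf b).support.card = m + 1 :=
      ⟨(τ.cycleOf b).support.card - 1, by omega⟩
    refine ⟨(List.range m).map fun k => (τ ^ (k + 1)) b, ?_⟩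
    rw [hl]
    show List.iterate τ b (τ.cycleOf b).support.card = _
    rw [← List.range_map_iterate]
    simp only [← Equiv.Perm.coe_pow]
    rw [hm, List.range_succ_eq_map, List.map_cons, List.map_map]
    simp [Function.comp_def]
  have hform2 : Equiv.swap a b * τ.cycleOf b = (a :: b :: t).formPerm := by
    rw [← hform, hxt, List.formPerm_cons_cons]
  have hnd2 : (a :: b :: t).Nodup := by
    rw [hxt] at hnd hanl
    exact List.nodup_cons.2 ⟨hanl, hnd⟩
  have hlen2 : 2 ≤ (a :: b :: t).length := by simp [Nat.le_add_left]
  constructor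
  · rw [hform2]
    exact List.isCycle_formPerm hnd2 hlen2
  · rw [hform2, List.support_formPerm_of_nodup _ hnd2 (by
      intro y hy
      simp only [List.cons.injEq] at hy
      exact absurd hy.2 (List.cons_ne_nil _ _)), ← hform,
      List.support_formPerm_of_nodup _ hnd (fun y => Equiv.Perm.toList_ne_singleton τ b y), hxt]
    simp [List.toFinset_cons]
  
/-- Multiplying by a transposition joining a fixed point `a` to `b` decreases the number of
orbits by one. -/
lemma orbits_swap_mul {τ : Equiv.Perm α} {a b : α} (hab : a ≠ b) (ha : τ a = a) :
    Multiset.card (Equiv.swap a b * τ).cycleType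
        + (Fintype.card α - (Equiv.swap a b * τ).support.card) + 1
      = Multiset.card τ.cycleType + (Fintype.card α - τ.support.card) := by
  classical
  have has : a ∉ τ.support := Equiv.Perm.notMem_support.2 ha
  by_cases hb : τ b = b
  · -- disjoint case : a new 2-cycle is created
    have hbs : b ∉ τ.support := Equiv.Perm.notMem_support.2 hb
    have hd : (Equiv.swap a b).Disjoint τ := by
      rw [Equiv.Perm.disjoint_iff_disjoint_support, Equiv.Perm.support_swap hab,
        Finset.disjoint_left]
      intro x hx
      simp only [Finset.mem_insert, Finset.mem_singleton] at hx
      rcases hx with rfl | rfl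
      · exact has
      · exact hbs
    have hct : (Equiv.swap a b * τ).cycleType = (Equiv.swap a b).cycleType + τ.cycleType :=
      hd.cycleType_mul
    have hsw : (Equiv.swap a b).cycleType = {2} := by
      have h1 : (Equiv.swap a b).IsCycle := Equiv.Perm.isCycle_swap hab
      rw [h1.cycleType, Equiv.Perm.card_support_swap hab]
    have hsupp : (Equiv.swap a b * τ).support.card = 2 + τ.support.card := by
      rw [hd.card_support_mul, Equiv.Perm.card_support_swap hab]
    have hle : (Equiv.swap a b * τ).support.card ≤ Fintype.card α := Finset.card_le_univ _
    rw [hsupp] at hle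
    rw [hct, hsw, hsupp]
    simp only [Multiset.card_add, Multiset.card_singleton]
    omega
  · -- joining case
    set c := τ.cycleOf b with hc
    have hc_mem : c ∈ τ.cycleFactorsFinset :=
      Equiv.Perm.cycleOf_mem_cycleFactorsFinset_iff.mpr (Equiv.Perm.mem_support.2 hb)
    set t := τ * c⁻¹ with ht
    have hdisj : t.Disjoint c := Equiv.Perm.disjoint_mul_inv_of_mem_cycleFactorsFinset hc_mem
    have hτ_eq : τ = c * t := by
      rw [hdisj.symm.commute.eq, ht, inv_mul_cancel_right]
    have hcsub : c.support ⊆ τ.support := Equiv.Perm.mem_cycleFactorsFinset_support_le hc_mem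
    have hasc : a ∉ c.support := fun h => has (hcsub h)
    have hast : a ∉ t.support := by
      rw [Equiv.Perm.notMem_support]
      have hca : c a = a := Equiv.Perm.notMem_support.1 hasc
      have : c⁻¹ a = a := by
        rw [Equiv.Perm.inv_eq_iff_eq, hca]
      rw [ht, Equiv.Perm.mul_apply, this, ha]
    obtain ⟨hcyc', hsupp'⟩ := swap_mul_cycleOf_isCycle hab ha hb
    have hccyc : c.IsCycle := Equiv.Perm.isCycle_cycleOf τ hb
    have hdisj' : (Equiv.swap a b * c).Disjoint t := by
      rw [Equiv.Perm.disjoint_iff_disjoint_support, hsupp']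
      rw [Equiv.Perm.disjoint_iff_disjoint_support] at hdisj
      rw [Finset.insert_eq, Finset.disjoint_union_left]
      exact ⟨by simpa [Finset.disjoint_left] using hast, hdisj.symm⟩
    have hσ_eq : Equiv.swap a b * τ = (Equiv.swap a b * c) * t := by
      rw [hτ_eq, mul_assoc]
    have hbsc : b ∈ c.support := by
      rw [Equiv.Perm.mem_support, hc, Equiv.Perm.cycleOf_apply_self]
      exact hb
    -- cycle type cards
    have hcardσ : Multiset.card (Equiv.swap a b * τ).cycleType
        = 1 + Multiset.card t.cycleType := by
      rw [hσ_eq, hdisj'.cycleType_mul, Multiset.card_add, hcyc'.cycleType]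
      simp
    have hcardτ : Multiset.card τ.cycleType = 1 + Multiset.card t.cycleType := by
      rw [hτ_eq, (hdisj.symm).cycleType_mul, Multiset.card_add, hccyc.cycleType]
      simp
    -- supports
    have hsuppτ : τ.support = c.support ∪ t.support := by
      conv_lhs => rw [hτ_eq]
      rw [hdisj.symm.support_mul]
    have hsuppσ : (Equiv.swap a b * τ).support = insert a τ.support := by
      rw [hσ_eq, hdisj'.support_mul, hsupp', ← hc, hsuppτ, Finset.insert_union]
    have hcards : (Equiv.swap a b * τ).support.card = τ.support.card + 1 := by
      rw [hsuppσ, Finset.card_insert_of_notMem has]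
    have hle : (Equiv.swap a b * τ).support.card ≤ Fintype.card α := Finset.card_le_univ _
    rw [hcards] at hle
    rw [hcardσ, hcardτ, hcards]
    omega

end Helpers

section Crux

open Equiv Equiv.Perm

/-- The equivalence between `Fin n` and the nonzero elements of `Fin (n+1)`. -/
def succEquivNeZero (n : ℕ) : Fin n ≃ {i : Fin (n + 1) // i ≠ 0} where
  toFun x := ⟨x.succ, Fin.succ_ne_zero x⟩
  invFun y := (y : Fin (n + 1)).pred y.2
  left_inv x := by simp
  right_inv y := by simp

lemma decomposeFin_zero_eq_extendDomain {n : ℕ} (e : Equiv.Perm (Fin n)) :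
    Equiv.Perm.decomposeFin.symm ((0 : Fin (n + 1)), e)
      = e.extendDomain (succEquivNeZero n) := by
  refine Equiv.ext fun i => Fin.cases ?_ (fun x => ?_) i
  · rw [Equiv.Perm.decomposeFin_symm_apply_zero,
      Equiv.Perm.extendDomain_apply_not_subtype e (succEquivNeZero n) (by simp)]
  · rw [Equiv.Perm.decomposeFin_symm_apply_succ,
      Equiv.Perm.extendDomain_apply_subtype e (succEquivNeZero n) (Fin.succ_ne_zero x)]
    simp [succEquivNeZero, Equiv.swap_self]

lemma cycleCount_decomposeFin {n : ℕ} (p : Fin (n + 1)) (e : Equiv.Perm (Fin n)) :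
    cycleCount (n + 1) (Equiv.Perm.decomposeFin.symm (p, e))
      = cycleCount n e + if p = 0 then 1 else 0 := by
  classical
  set τ := Equiv.Perm.decomposeFin.symm ((0 : Fin (n + 1)), e) with hτ
  have hct : τ.cycleType = e.cycleType := by
    rw [hτ, decomposeFin_zero_eq_extendDomain]
    exact Equiv.Perm.cycleType_extendDomain _
  have hcs : τ.support.card = e.support.card := by
    rw [hτ, decomposeFin_zero_eq_extendDomain]
    exact Equiv.Perm.card_support_extend_domain _
  have hse : e.support.card ≤ n := by
    have := Finset.card_le_univ e.support
    simpa using this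
  have hccτ : cycleCount (n + 1) τ = cycleCount n e + 1 := by
    unfold cycleCount
    rw [hct, hcs]
    omega
  by_cases hp : p = 0
  · subst hp
    simpa using hccτ
  · have hτ0 : τ 0 = 0 := by
      rw [hτ, Equiv.Perm.decomposeFin_symm_apply_zero]
    have hd : Equiv.Perm.decomposeFin.symm (p, e) = Equiv.swap 0 p * τ := by
      ext i
      refine Fin.cases ?_ (fun x => ?_) i
      · rw [Equiv.Perm.decomposeFin_symm_apply_zero, Equiv.Perm.mul_apply, hτ0,
          Equiv.swap_apply_left]
      · rw [Equiv.Perm.decomposeFin_symm_apply_succ, Equiv.Perm.mul_apply, hτ,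
          Equiv.Perm.decomposeFin_symm_apply_succ]
        simp [Equiv.swap_self]
    have h0p : (0 : Fin (n + 1)) ≠ p := fun h => hp h.symm
    have key := orbits_swap_mul (τ := τ) h0p hτ0
    rw [← hd] at key
    simp only [Fintype.card_fin] at key
    rw [if_neg hp, add_zero]
    unfold cycleCount at hccτ ⊢
    omega

end Crux

section Stirling

open Equiv

lemma stirling1_eq_card (n k : ℕ) :
    stirling1 n k
      = (Finset.univ.filter fun σ : Equiv.Perm (Fin n) => cycleCount n σ = k).card := by
  classical
  rw [stirling1, Nat.card_eq_fintype_card, Fintype.card_subtype]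

lemma stirling1_zero (k : ℕ) : stirling1 0 k = if k = 0 then 1 else 0 := by
  classical
  have hσ : ∀ σ : Equiv.Perm (Fin 0), cycleCount 0 σ = 0 := by
    intro σ
    have : σ = 1 := Subsingleton.elim σ 1
    subst this
    simp [cycleCount]
  rw [stirling1_eq_card]
  by_cases hk : k = 0
  · subst hk
    simp only [hσ, if_pos rfl, Finset.filter_true_of_mem (fun _ _ => rfl)]
    simp [hσ]
  · rw [if_neg hk, Finset.card_eq_zero, Finset.filter_eq_empty_iff]
    intro σ _
    rw [hσ σ]
    exact fun h => hk h.symm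

lemma stirling1_succ (n k : ℕ) :
    stirling1 (n + 1) k = (if k = 0 then 0 else stirling1 n (k - 1)) + n * stirling1 n k := by
  classical
  have step1 : stirling1 (n + 1) k
      = Nat.card {q : Fin (n + 1) × Equiv.Perm (Fin n) //
          cycleCount n q.2 + (if q.1 = 0 then 1 else 0) = k} := by
    rw [stirling1]
    refine Nat.card_congr (Equiv.subtypeEquiv Equiv.Perm.decomposeFin fun σ => ?_)
    have h := cycleCount_decomposeFin (Equiv.Perm.decomposeFin σ).1 (Equiv.Perm.decomposeFin σ).2
    rw [Prod.mk.eta, Equiv.symm_apply_apply] at h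
    rw [h]
  have step2 : Nat.card {q : Fin (n + 1) × Equiv.Perm (Fin n) //
          cycleCount n q.2 + (if q.1 = 0 then 1 else 0) = k}
      = ∑ p : Fin (n + 1), ∑ e : Equiv.Perm (Fin n),
          if cycleCount n e + (if p = 0 then 1 else 0) = k then 1 else 0 := by
    rw [Nat.card_eq_fintype_card, Fintype.card_subtype, Finset.card_filter,
      Fintype.sum_prod_type]
  rw [step1, step2, Fin.sum_univ_succ]
  have hzero : (∑ e : Equiv.Perm (Fin n),
        if cycleCount n e + (if (0 : Fin (n + 1)) = 0 then 1 else 0) = k then 1 else 0)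
      = if k = 0 then 0 else stirling1 n (k - 1) := by
    cases k with
    | zero =>
      rw [if_pos rfl]
      refine Finset.sum_eq_zero fun e _ => ?_
      rw [if_neg (by simp)]
    | succ k' =>
      rw [if_neg (Nat.succ_ne_zero k'), Nat.succ_sub_one, stirling1_eq_card, Finset.card_filter]
      refine Finset.sum_congr rfl fun e _ => if_congr ?_ rfl rfl
      simp
  have hsucc : (∑ p : Fin n, ∑ e : Equiv.Perm (Fin n),
        if cycleCount n e + (if (p.succ : Fin (n + 1)) = 0 then 1 else 0) = k then 1 else 0)
      = n * stirling1 n k := by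
    have he : ∀ p : Fin n, (∑ e : Equiv.Perm (Fin n),
        if cycleCount n e + (if (p.succ : Fin (n + 1)) = 0 then 1 else 0) = k then 1 else 0)
          = stirling1 n k := by
      intro p
      rw [stirling1_eq_card, Finset.card_filter]
      refine Finset.sum_congr rfl fun e _ => if_congr ?_ rfl rfl
      simp [Fin.succ_ne_zero p]
    rw [Finset.sum_congr rfl fun p _ => he p, Finset.sum_const, smul_eq_mul,
      Finset.card_univ, Fintype.card_fin]
  rw [hzero, hsucc]

lemma asc_coeff : ∀ n k : ℕ, (ascPochhammer ℕ n).coeff k = stirling1 n k := by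
  intro n
  induction n with
  | zero =>
    intro k
    rw [ascPochhammer_zero, stirling1_zero, Polynomial.coeff_one]
  | succ n ih =>
    intro k
    rw [ascPochhammer_succ_right, stirling1_succ, mul_add, Polynomial.coeff_add]
    have hnc : ((n : ℕ[X])) = Polynomial.C (n : ℕ) := by
      simp
    rw [hnc, Polynomial.coeff_mul_C, ih k]
    cases k with
    | zero => simp [Polynomial.coeff_mul_X_zero, mul_comm]
    | succ k' =>
      rw [Polynomial.coeff_mul_X, ih k']
      simp [mul_comm]

end Stirling

section Poly

lemma sum_asc (n : ℕ) :
    (Polynomial.X : Polynomial ℝ) *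
        ∑ k ∈ Finset.range (n + 1),
          Polynomial.C ((k.factorial : ℝ))⁻¹ * ascPochhammer ℝ k
      = Polynomial.C ((n.factorial : ℝ))⁻¹ * ascPochhammer ℝ (n + 1) := by
  induction n with
  | zero => simp [ascPochhammer_one]
  | succ n ih =>
    rw [Finset.sum_range_succ, mul_add, ih, ascPochhammer_succ_right ℝ (n + 1)]
    have hfact : ((n.factorial : ℝ))⁻¹
        = (((n + 1) * n.factorial : ℕ) : ℝ)⁻¹ * ((n : ℝ) + 1) := by
      push_cast
      have h1 : ((n : ℝ) + 1) ≠ 0 := by positivity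
      have h2 : (n.factorial : ℝ) ≠ 0 := by
        exact_mod_cast Nat.factorial_ne_zero n
      field_simp
    rw [Nat.factorial_succ, hfact]
    have hcast : (((n : ℕ) + 1 : ℕ) : Polynomial ℝ) = Polynomial.C ((n : ℝ) + 1) := by
      push_cast
      simp
    rw [hcast]
    simp only [map_mul, map_add]
    ring

lemma Pp_one_eq (m : ℕ) :
    Pp 1 m = Polynomial.C ((m.factorial : ℝ))⁻¹ * ascPochhammer ℝ m := by
  induction m using Nat.strong_induction_on with
  | _ m ih =>
    match m with
    | 0 => simp [Pp]
    | n + 1 =>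
      rw [Pp]
      have hsum : ∑ k ∈ (Finset.range (n + 1)).attach, Pp 1 k.1
          = ∑ k ∈ Finset.range (n + 1),
              Polynomial.C ((k.factorial : ℝ))⁻¹ * ascPochhammer ℝ k := by
        rw [← Finset.sum_attach (Finset.range (n + 1))
          (fun k => Polynomial.C ((k.factorial : ℝ))⁻¹ * ascPochhammer ℝ k)]
        exact Finset.sum_congr rfl fun k _ => ih k.1 (Finset.mem_range.mp k.2)
      rw [hsum, mul_assoc, sum_asc n]
      have hrpow : ((((n + 1 : ℕ)) : ℝ) ^ (1 : ℝ)) = ((n + 1 : ℕ) : ℝ) :=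
        Real.rpow_one _
      rw [hrpow, Nat.factorial_succ, ← mul_assoc, ← Polynomial.C_mul]
      congr 2
      push_cast
      have h1 : ((n : ℝ) + 1) ≠ 0 := by positivity
      have h2 : (n.factorial : ℝ) ≠ 0 := by exact_mod_cast Nat.factorial_ne_zero n
      field_simp

end Poly

/-- `A_{n,k}(1) = c(n,k)/n!`, where `c(n,k)` is the unsigned Stirling number of the
first kind. -/
theorem coeff_at_one_eq_stirling (n : ℕ) (hn : 1 ≤ n) (k : ℕ) (hk : k ≤ n) :
    A n k 1 = (stirling1 n k : ℝ) / (n.factorial : ℝ) := by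
  rw [A, Pp_one_eq, Polynomial.coeff_C_mul]
  have hmap : ascPochhammer ℝ n = (ascPochhammer ℕ n).map (algebraMap ℕ ℝ) :=
    (ascPochhammer_map _ n).symm
  rw [hmap, Polynomial.coeff_map, asc_coeff, eq_natCast, div_eq_mul_inv, mul_comm]
end

section
/- Peak theorem: let n ≥ 6 be an integer, s ∈ (0,1), and suppose k₀ is a positive integer satisfying k₀ = 1 + ∑_{k=1}^{n-1} 1/(1+k^s). Then the sequence {A_{n,k}(s)}_{k=0}^{n} has a peak at k₀, i.e. A_{n,k₀}(s) > A_{n,k}(s) for every k ∈ {0,1,…,n} with k ≠ k₀. -/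
open Finset Polynomial MeasureTheory Filter

namespace PeakAux

noncomputable def pbp (s : Finset ℕ) (q : ℕ → ℝ) : Polynomial ℝ :=
  ∏ i ∈ s, (C (1 - q i) + C (q i) * X)

noncomputable def pb (s : Finset ℕ) (q : ℕ → ℝ) (k : ℕ) : ℝ := (pbp s q).coeff k

lemma coeff_linear_mul (x y : ℝ) (Ψ : ℝ[X]) (k : ℕ) :
    ((C x + C y * X) * Ψ).coeff k
      = x * Ψ.coeff k + y * (if k = 0 then 0 else Ψ.coeff (k-1)) := by
  rcases k with _ | k
  · simp [add_mul, mul_assoc, Polynomial.mul_coeff_zero]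
  · simp [add_mul, mul_assoc, Polynomial.coeff_X_mul]

lemma pbp_natDegree_le (s : Finset ℕ) (q : ℕ → ℝ) : (pbp s q).natDegree ≤ s.card := by
  refine le_trans (Polynomial.natDegree_prod_le _ _) ?_
  rw [Finset.card_eq_sum_ones]
  refine Finset.sum_le_sum fun i _ => ?_
  refine le_trans (Polynomial.natDegree_add_le _ _) ?_
  simp only [Polynomial.natDegree_C, max_le_iff]
  constructor
  · omega
  · exact le_trans (Polynomial.natDegree_C_mul_le _ _) (by simp [Polynomial.natDegree_X_le])

lemma pb_eq_zero {s : Finset ℕ} {q : ℕ → ℝ} {k : ℕ} (h : s.card < k) : pb s q k = 0 :=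
  Polynomial.coeff_eq_zero_of_natDegree_lt (lt_of_le_of_lt (pbp_natDegree_le s q) h)

lemma pbp_insert {a : ℕ} {s : Finset ℕ} (h : a ∉ s) (q : ℕ → ℝ) :
    pbp (insert a s) q = (C (1 - q a) + C (q a) * X) * pbp s q :=
  Finset.prod_insert h

lemma pb_insert {a : ℕ} {s : Finset ℕ} (h : a ∉ s) (q : ℕ → ℝ) (k : ℕ) :
    pb (insert a s) q k
      = (1 - q a) * pb s q k + q a * (if k = 0 then 0 else pb s q (k-1)) := by
  rw [pb, pbp_insert h, coeff_linear_mul]; rfl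

lemma pb_congr {s : Finset ℕ} {q q' : ℕ → ℝ} (h : ∀ i ∈ s, q i = q' i) (k : ℕ) :
    pb s q k = pb s q' k := by
  unfold pb pbp
  rw [Finset.prod_congr rfl fun i hi => by rw [h i hi]]

lemma pb_nonneg {s : Finset ℕ} {q : ℕ → ℝ} (hq : ∀ i ∈ s, q i ∈ Set.Icc (0:ℝ) 1) (k : ℕ) :
    0 ≤ pb s q k := by
  induction s using Finset.induction_on generalizing k with
  | empty => unfold pb pbp; simp [Polynomial.coeff_one]; positivity
  | @insert a s ha ih =>
    rw [pb_insert ha]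
    have h1 := hq a (mem_insert_self a s)
    have h2 : ∀ i ∈ s, q i ∈ Set.Icc (0:ℝ) 1 := fun i hi => hq i (mem_insert_of_mem hi)
    have := ih h2 k
    have h3 : (0:ℝ) ≤ (if k = 0 then 0 else pb s q (k-1)) := by
      split
      · exact le_refl 0
      · exact ih h2 _
    have t1 : 0 ≤ (1 - q a) * pb s q k := mul_nonneg (by linarith [h1.2]) (ih h2 k)
    have t2 : 0 ≤ q a * (if k = 0 then 0 else pb s q (k-1)) := mul_nonneg h1.1 h3
    linarith

lemma pb_pos {s : Finset ℕ} {q : ℕ → ℝ} (hq : ∀ i ∈ s, q i ∈ Set.Ioo (0:ℝ) 1) {k : ℕ}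
    (hk : k ≤ s.card) : 0 < pb s q k := by
  induction s using Finset.induction_on generalizing k with
  | empty =>
    have hk0 : k = 0 := by simpa using hk
    subst hk0
    unfold pb pbp; simp
  | @insert a s ha ih =>
    have h1 := hq a (mem_insert_self a s)
    have h2 : ∀ i ∈ s, q i ∈ Set.Ioo (0:ℝ) 1 := fun i hi => hq i (mem_insert_of_mem hi)
    have h2' : ∀ i ∈ s, q i ∈ Set.Icc (0:ℝ) 1 := fun i hi => ⟨(h2 i hi).1.le, (h2 i hi).2.le⟩
    rw [pb_insert ha]
    rcases Nat.eq_zero_or_pos k with rfl | hk0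
    · simp only [reduceIte, mul_zero, add_zero]
      have u1 : (0:ℝ) < 1 - q a := by linarith [h1.2]
      have u2 : 0 < pb s q 0 := ih h2 (Nat.zero_le _)
      exact mul_pos u1 u2
    · rw [if_neg (Nat.pos_iff_ne_zero.mp hk0)]
      have hk1 : k - 1 ≤ s.card := by
        rw [Finset.card_insert_of_notMem ha] at hk; omega
      have t2 : 0 < q a * pb s q (k-1) := mul_pos h1.1 (ih h2 hk1)
      have t1 : 0 ≤ (1 - q a) * pb s q k := by
        apply mul_nonneg (by linarith [h1.2]) (pb_nonneg h2' k)
      linarith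


lemma coeff_quad_mul (a b c : ℝ) (Ψ : Polynomial ℝ) (k : ℕ) :
    ((C a + C b * X + C c * X^2) * Ψ).coeff k
      = a * Ψ.coeff k + b * (if k = 0 then 0 else Ψ.coeff (k-1))
        + c * (if k ≤ 1 then 0 else Ψ.coeff (k-2)) := by
  rw [add_mul, add_mul, mul_assoc, mul_assoc]
  rw [Polynomial.coeff_add, Polynomial.coeff_add, Polynomial.coeff_C_mul,
    Polynomial.coeff_C_mul, Polynomial.coeff_C_mul]
  congr 2
  · rcases k with _ | k
    · simp [Polynomial.mul_coeff_zero]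
    · simp [Polynomial.coeff_X_mul]
  · rcases k with _ | k
    · simp [Polynomial.mul_coeff_zero]
    · rcases k with _ | k
      · rw [if_pos (by omega)]
        have : (X^2 * Ψ).coeff 1 = ((X * (X * Ψ))).coeff 1 := by ring_nf
        rw [this, Polynomial.coeff_X_mul, Polynomial.mul_coeff_zero]
        simp
      · rw [if_neg (by omega)]
        have h2 : k + 1 + 1 = k + 2 := by omega
        rw [h2, Polynomial.coeff_X_pow_mul Ψ 2 k]
        congr 1

lemma coeff_bin {x : ℝ} (hx0 : 0 < x) (r j : ℕ) (hj : j ≤ r) :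
    ((C (1-x) + C x * X)^r).coeff j = (r.choose j : ℝ) * x^j * (1-x)^(r-j) := by
  have hfac : C (1-x) + C x * X = C x * (X + C ((1-x)/x)) := by
    rw [mul_add, ← C_mul, mul_div_cancel₀ _ (ne_of_gt hx0)]
    ring
  rw [hfac, mul_pow, ← C_pow, coeff_C_mul, Polynomial.coeff_X_add_C_pow]
  have hxr : x ^ r = x ^ j * x ^ (r - j) := by
    rw [← pow_add]; congr 1; omega
  rw [hxr, div_pow]
  have : x ^ (r - j) ≠ 0 := pow_ne_zero _ (ne_of_gt hx0)
  field_simp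

lemma bin_strict {r K' : ℕ} (hK1 : 1 ≤ K') (hKr : K' + 1 ≤ r) {x : ℝ}
    (hx0 : 0 < x) (hx1 : x < 1) (hrx : (r:ℝ) * x = (K':ℕ)) :
    (r.choose (K'+1) : ℝ) * x^(K'+1) * (1-x)^(r-(K'+1))
      < (r.choose K' : ℝ) * x^K' * (1-x)^(r-K') := by
  have hy : (0:ℝ) < 1 - x := by linarith
  have hr0 : (0:ℝ) < r := by
    have h2 : (0:ℕ) < r := by omega
    exact_mod_cast h2
  -- core inequality
  have hchoosepos : (0:ℝ) < (r.choose (K'+1) : ℝ) := by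
    have := Nat.choose_pos hKr
    exact_mod_cast this
  have hnat : r.choose (K'+1) * (K'+1) = r.choose K' * (r - K') := Nat.choose_succ_right_eq r K'
  have hcast : (r.choose (K'+1) : ℝ) * (K'+1) = (r.choose K' : ℝ) * ((r:ℝ) - K') := by
    have hle : K' ≤ r := by omega
    have := congrArg (fun n : ℕ => (n:ℝ)) hnat
    push_cast [Nat.cast_sub hle] at this
    exact_mod_cast this
  have hry : (r:ℝ) * (1-x) = (r:ℝ) - K' := by rw [mul_sub, mul_one, hrx]
  have hcore : (r.choose (K'+1) : ℝ) * x < (r.choose K' : ℝ) * (1-x) := by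
    rw [← mul_lt_mul_iff_right₀ hr0]
    have l1 : (r:ℝ) * ((r.choose (K'+1) : ℝ) * x) = (r.choose (K'+1) : ℝ) * ((r:ℝ) * x) := by ring
    have l2 : (r:ℝ) * ((r.choose K' : ℝ) * (1-x)) = (r.choose K' : ℝ) * ((r:ℝ) * (1-x)) := by ring
    rw [l1, l2, hrx, hry, ← hcast]
    have : (K':ℝ) < (K':ℝ) + 1 := by linarith
    nlinarith [hchoosepos]
  have hexp : r - K' = (r - (K'+1)) + 1 := by omega
  have hpow : (0:ℝ) < x^K' * (1-x)^(r-(K'+1)) := by positivity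
  have expand1 : (r.choose (K'+1) : ℝ) * x^(K'+1) * (1-x)^(r-(K'+1))
      = ((r.choose (K'+1) : ℝ) * x) * (x^K' * (1-x)^(r-(K'+1))) := by
    rw [pow_succ]; ring
  have expand2 : (r.choose K' : ℝ) * x^K' * (1-x)^(r-K')
      = ((r.choose K' : ℝ) * (1-x)) * (x^K' * (1-x)^(r-(K'+1))) := by
    rw [hexp, pow_succ]; ring
  rw [expand1, expand2]
  exact mul_lt_mul_of_pos_right hcore hpow


lemma lc2_of_lc {s : Finset ℕ} {q : ℕ → ℝ} (hq : ∀ i ∈ s, q i ∈ Set.Ioo (0:ℝ) 1)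
    (hlc : ∀ k, pb s q k * pb s q (k+2) ≤ pb s q (k+1)^2) (k : ℕ) :
    pb s q k * pb s q (k+3) ≤ pb s q (k+1) * pb s q (k+2) := by
  have hIcc : ∀ i ∈ s, q i ∈ Set.Icc (0:ℝ) 1 :=
    fun i hi => ⟨(hq i hi).1.le, (hq i hi).2.le⟩
  by_cases h3 : s.card < k + 3
  · rw [pb_eq_zero h3, mul_zero]
    exact mul_nonneg (pb_nonneg hIcc _) (pb_nonneg hIcc _)
  · push_neg at h3
    have p1 : 0 < pb s q (k+1) := pb_pos hq (by omega)
    have p2 : 0 < pb s q (k+2) := pb_pos hq (by omega)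
    have p0 : 0 < pb s q k := pb_pos hq (by omega)
    have p3 : 0 < pb s q (k+3) := pb_pos hq (by omega)
    have A := hlc k
    have B := hlc (k+1)
    have B' : pb s q (k+1) * pb s q (k+3) ≤ pb s q (k+2)^2 := by
      have : k + 1 + 2 = k + 3 := by omega
      rw [← this]; simpa using B
    nlinarith [mul_le_mul_of_nonneg_left B' p0.le, mul_le_mul_of_nonneg_right A p3.le]

lemma pb_lc {s : Finset ℕ} {q : ℕ → ℝ} (hq : ∀ i ∈ s, q i ∈ Set.Ioo (0:ℝ) 1) :
    ∀ k, pb s q k * pb s q (k+2) ≤ pb s q (k+1)^2 := by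
  induction s using Finset.induction_on with
  | empty =>
    intro k
    rw [pb_eq_zero (by simp : (∅:Finset ℕ).card < k + 2), mul_zero]
    positivity
  | @insert a s ha ih =>
    intro k
    have h1 := hq a (mem_insert_self a s)
    have h2 : ∀ i ∈ s, q i ∈ Set.Ioo (0:ℝ) 1 := fun i hi => hq i (mem_insert_of_mem hi)
    have hIcc : ∀ i ∈ s, q i ∈ Set.Icc (0:ℝ) 1 :=
      fun i hi => ⟨(h2 i hi).1.le, (h2 i hi).2.le⟩
    have hlc := ih h2
    have hu : (0:ℝ) ≤ 1 - q a := by linarith [h1.2]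
    have hv : (0:ℝ) ≤ q a := h1.1.le
    rcases Nat.eq_zero_or_pos k with rfl | hk0
    · rw [pb_insert ha, pb_insert ha, pb_insert ha]
      norm_num
      have hn0 := pb_nonneg hIcc 0
      have hn1 := pb_nonneg hIcc 1
      set E0 := pb s q 0
      set E1 := pb s q 1
      set E2 := pb s q 2
      have A : E0 * E2 ≤ E1^2 := hlc 0
      have key : ((1-q a) * E1 + q a * E0)^2 - ((1-q a) * E0 + q a * 0) * ((1-q a) * E2 + q a * E1)
          = (1-q a)^2*(E1^2 - E0*E2) + (1-q a)*(q a)*(E0*E1) + (q a)^2*E0^2 := by ring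
      nlinarith [mul_nonneg (mul_nonneg hu hu) (sub_nonneg.mpr A),
        mul_nonneg (mul_nonneg hu hv) (mul_nonneg hn0 hn1),
        mul_nonneg (mul_nonneg hv hv) (mul_nonneg hn0 hn0)]
    · obtain ⟨k', rfl⟩ : ∃ k', k = k' + 1 := ⟨k - 1, by omega⟩
      rw [pb_insert ha, pb_insert ha, pb_insert ha]
      have g1 : k' + 1 + 2 - 1 = k' + 2 := by omega
      have g2 : k' + 1 + 1 - 1 = k' + 1 := by omega
      have g3 : k' + 1 - 1 = k' := by omega
      rw [if_neg (by omega : ¬ k' + 1 + 2 = 0), if_neg (by omega : ¬ k' + 1 + 1 = 0),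
        if_neg (by omega : ¬ k' + 1 = 0), g1, g2, g3]
      have e12 : k' + 1 + 2 = k' + 3 := by omega
      have e11 : k' + 1 + 1 = k' + 2 := by omega
      rw [e12, e11]
      set u := 1 - q a
      set v := q a
      set E0 := pb s q k'
      set E1 := pb s q (k'+1)
      set E2 := pb s q (k'+2)
      set E3 := pb s q (k'+3)
      have A : E0 * E2 ≤ E1^2 := hlc k'
      have B : E1 * E3 ≤ E2^2 := by
        have := hlc (k'+1)
        have h : k' + 1 + 2 = k' + 3 := by omega
        rw [h] at this; exact this
      have Cq : E0 * E3 ≤ E1 * E2 := lc2_of_lc h2 hlc k'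
      have key : (u * E2 + v * E1)^2 - (u * E1 + v * E0) * (u * E3 + v * E2)
          = u^2*(E2^2 - E1*E3) + v^2*(E1^2 - E0*E2) + u*v*(E1*E2 - E0*E3) := by ring
      nlinarith [mul_nonneg (mul_nonneg hu hu) (sub_nonneg.mpr B),
        mul_nonneg (mul_nonneg hv hv) (sub_nonneg.mpr A),
        mul_nonneg (mul_nonneg hu hv) (sub_nonneg.mpr Cq)]

lemma pb_rev {s : Finset ℕ} {q : ℕ → ℝ} : ∀ {k : ℕ}, k ≤ s.card →
    pb s q k = pb s (fun i => 1 - q i) (s.card - k) := by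
  induction s using Finset.induction_on with
  | empty =>
    intro k hk
    have : k = 0 := by simpa using hk
    subst this
    unfold pb pbp
    simp
  | @insert a s ha ih =>
    intro k hk
    rw [Finset.card_insert_of_notMem ha] at hk ⊢
    rw [pb_insert ha, pb_insert ha]
    rcases Nat.eq_zero_or_pos k with rfl | hk0
    · simp only [reduceIte, mul_zero, add_zero, Nat.sub_zero,
        if_neg (by omega : ¬ s.card + 1 = 0), Nat.add_sub_cancel]
      have hz : pb s (fun i => 1 - q i) (s.card + 1) = 0 := pb_eq_zero (by omega)
      rw [hz, mul_zero]
      have ih0 := ih (Nat.zero_le s.card)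
      rw [Nat.sub_zero] at ih0
      rw [← ih0]
      ring
    · rcases Nat.lt_or_ge k (s.card + 1) with hlt | hge
      · -- 1 ≤ k ≤ s.card
        have hks : k ≤ s.card := by omega
        rw [if_neg (by omega : ¬ k = 0)]
        have hrev1 := ih hks
        have hrev2 := ih (show k - 1 ≤ s.card by omega)
        rcases Nat.eq_zero_or_pos (s.card + 1 - k) with hz | hpos
        · omega
        · rw [if_neg (by omega : ¬ s.card + 1 - k = 0)]
          have i1 : s.card + 1 - k - 1 = s.card - k := by omega
          have i2 : s.card + 1 - k = s.card - (k - 1) := by omega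
          rw [i1, i2, ← hrev1, ← hrev2]
          ring
      · -- k = s.card + 1
        have hke : k = s.card + 1 := by omega
        subst hke
        rw [if_neg (by omega : ¬ s.card + 1 = 0)]
        have hz : pb s q (s.card + 1) = 0 := pb_eq_zero (by omega)
        rw [hz, Nat.sub_self, Nat.add_sub_cancel]
        simp only [reduceIte, mul_zero, add_zero, zero_add]
        have ihn := ih (le_refl s.card)
        rw [Nat.sub_self] at ihn
        rw [ihn]
        ring
  
lemma pb_continuous (s : Finset ℕ) (k : ℕ) :
    Continuous (fun q : ℕ → ℝ => pb s q k) := by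
  induction s using Finset.induction_on generalizing k with
  | empty =>
    have : (fun q : ℕ → ℝ => pb ∅ q k) = fun _ => pb ∅ (fun _ => 0) k := by
      funext q; exact pb_congr (by simp) k
    rw [this]; exact continuous_const
  | @insert a s ha ih =>
    have heq : (fun q : ℕ → ℝ => pb (insert a s) q k)
        = fun q => (1 - q a) * pb s q k + q a * (if k = 0 then 0 else pb s q (k-1)) := by
      funext q; rw [pb_insert ha]
    rw [heq]
    rcases Nat.eq_zero_or_pos k with rfl | hk0
    · simp only [reduceIte, mul_zero, add_zero]
      exact (continuous_const.sub (continuous_apply a)).mul (ih 0)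
    · simp only [if_neg (by omega : ¬ k = 0)]
      exact ((continuous_const.sub (continuous_apply a)).mul (ih k)).add
        ((continuous_apply a).mul (ih (k-1)))


lemma sum_two {s : Finset ℕ} {i j : ℕ} (hi : i ∈ s) (hj : j ∈ s) (hij : i ≠ j)
    (f : ℕ → ℝ) :
    ∑ l ∈ s, f l = f i + f j + ∑ l ∈ (s.erase i).erase j, f l := by
  rw [← Finset.add_sum_erase _ f hi]
  have hj' : j ∈ s.erase i := Finset.mem_erase.mpr ⟨fun h => hij h.symm, hj⟩
  rw [← Finset.add_sum_erase _ f hj']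
  ring

lemma quad_id (x s0 : ℝ) :
    (C (1-x) + C x * X) * (C (1-(s0-x)) + C (s0-x) * X)
      = C (1-s0+x*(s0-x)) + C (s0 - 2*(x*(s0-x))) * X + C (x*(s0-x)) * X^2 := by
  simp only [map_add, map_sub, map_mul, map_one, map_ofNat]
  ring

lemma prod_three {s : Finset ℕ} {i j : ℕ} (hi : i ∈ s) (hj : j ∈ s) (hij : i ≠ j)
    (q : ℕ → ℝ) :
    pbp s q = (C (1 - q i) + C (q i) * X) * ((C (1 - q j) + C (q j) * X)
      * pbp ((s.erase i).erase j) q) := by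
  unfold pbp
  rw [← Finset.mul_prod_erase s _ hi]
  have hj' : j ∈ s.erase i := Finset.mem_erase.mpr ⟨fun h => hij h.symm, hj⟩
  rw [← Finset.mul_prod_erase (s.erase i) _ hj']

lemma exists_affine {s : Finset ℕ} {q : ℕ → ℝ} {i j : ℕ}
    (hi : i ∈ s) (hj : j ∈ s) (hij : i ≠ j) (K : ℕ) :
    ∃ u B : ℝ, ∀ x : ℝ,
      pb s (Function.update (Function.update q i x) j (q i + q j - x)) (K+1)
        - pb s (Function.update (Function.update q i x) j (q i + q j - x)) K
      = u + B * (x * ((q i + q j) - x)) := by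
  set s0 := q i + q j with hs0
  set rest := (s.erase i).erase j with hrest
  set Ψ := pbp rest q with hΨ
  -- coefficients of Ψ we will need, as fixed reals
  set a0 := Ψ.coeff (K+1)
  set a1 := (if K+1 = 0 then (0:ℝ) else Ψ.coeff (K+1-1))
  set a2 := (if K+1 ≤ 1 then (0:ℝ) else Ψ.coeff (K+1-2))
  set b0 := Ψ.coeff K
  set b1 := (if K = 0 then (0:ℝ) else Ψ.coeff (K-1))
  set b2 := (if K ≤ 1 then (0:ℝ) else Ψ.coeff (K-2))
  refine ⟨(1-s0)*(a0-b0) + s0*(a1-b1), (a0-b0) - 2*(a1-b1) + (a2-b2), fun x => ?_⟩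
  set Q := Function.update (Function.update q i x) j (s0 - x) with hQ
  have hQi : Q i = x := by
    rw [hQ, Function.update_of_ne hij, Function.update_self]
  have hQj : Q j = s0 - x := by rw [hQ, Function.update_self]
  have hQrest : pbp rest Q = Ψ := by
    rw [hΨ]
    unfold pbp
    refine Finset.prod_congr rfl fun l hl => ?_
    have hlj : l ≠ j := (Finset.mem_erase.mp hl).1
    have hli : l ≠ i := (Finset.mem_erase.mp (Finset.mem_erase.mp hl).2).1
    rw [hQ, Function.update_of_ne hlj, Function.update_of_ne hli]
  have hprod : pbp s Q = (C (1-s0+x*(s0-x)) + C (s0 - 2*(x*(s0-x))) * X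
      + C (x*(s0-x)) * X^2) * Ψ := by
    rw [prod_three hi hj hij Q, hQi, hQj, ← mul_assoc, quad_id, hQrest]
  unfold pb
  rw [hprod, coeff_quad_mul, coeff_quad_mul]
  ring


/-- Darroch's inequality, upper side. -/
lemma darroch {s : Finset ℕ} {q : ℕ → ℝ} {K : ℕ}
    (hq : ∀ i ∈ s, q i ∈ Set.Icc (0:ℝ) 1) (hsum : ∑ i ∈ s, q i = (K:ℝ)) :
    pb s q (K+1) < pb s q K := by
  classical
  set F : (ℕ → ℝ) → ℝ := fun p => pb s p (K+1) - pb s p K with hF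
  have hFcont : Continuous F := (pb_continuous s (K+1)).sub (pb_continuous s K)
  set Sset : Set (ℕ → ℝ) := {p | (∀ i, p i ∈ Set.Icc (0:ℝ) 1)
      ∧ (∀ i, i ∉ s → p i = 0) ∧ ∑ i ∈ s, p i = (K:ℝ)} with hSset
  set q0 : ℕ → ℝ := fun i => if i ∈ s then q i else 0 with hq0
  have hq0S : q0 ∈ Sset := by
    refine ⟨fun i => ?_, fun i hi => by simp [hq0, hi], ?_⟩
    · by_cases hi : i ∈ s
      · simpa [hq0, hi] using hq i hi
      · simp [hq0, hi]
    · rw [← hsum]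
      exact Finset.sum_congr rfl fun i hi => by simp [hq0, hi]
  have hFq0 : F q0 = pb s q (K+1) - pb s q K := by
    rw [hF]
    have h1 : pb s q0 (K+1) = pb s q (K+1) := pb_congr (fun i hi => by simp [hq0, hi]) _
    have h2 : pb s q0 K = pb s q K := pb_congr (fun i hi => by simp [hq0, hi]) _
    simp [h1, h2]
  have hSclosed : IsClosed Sset := by
    have h1 : IsClosed {p : ℕ → ℝ | ∀ i, p i ∈ Set.Icc (0:ℝ) 1} := by
      have : {p : ℕ → ℝ | ∀ i, p i ∈ Set.Icc (0:ℝ) 1}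
          = ⋂ i, (fun p : ℕ → ℝ => p i) ⁻¹' (Set.Icc 0 1) := by
        ext p; simp
      rw [this]
      exact isClosed_iInter fun i => isClosed_Icc.preimage (continuous_apply i)
    have h2 : IsClosed {p : ℕ → ℝ | ∀ i, i ∉ s → p i = 0} := by
      have : {p : ℕ → ℝ | ∀ i, i ∉ s → p i = 0}
          = ⋂ i ∈ {i : ℕ | i ∉ s}, {p : ℕ → ℝ | p i = 0} := by
        ext p; simp
      rw [this]
      exact isClosed_biInter fun i _ =>
        isClosed_eq (continuous_apply i) continuous_const
    have h3 : IsClosed {p : ℕ → ℝ | ∑ i ∈ s, p i = (K:ℝ)} :=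
      isClosed_eq (continuous_finset_sum s fun i _ => continuous_apply i) continuous_const
    have hdec : Sset = {p : ℕ → ℝ | ∀ i, p i ∈ Set.Icc (0:ℝ) 1}
        ∩ ({p | ∀ i, i ∉ s → p i = 0} ∩ {p | ∑ i ∈ s, p i = (K:ℝ)}) := by
      ext p; simp only [hSset, Set.mem_setOf_eq, Set.mem_inter_iff]
    rw [hdec]
    exact h1.inter (h2.inter h3)
  have hScompact : IsCompact Sset := by
    have hbig : IsCompact (Set.pi Set.univ (fun _ : ℕ => Set.Icc (0:ℝ) 1)) :=
      isCompact_univ_pi fun _ => isCompact_Icc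
    refine hbig.of_isClosed_subset hSclosed ?_
    intro p hp
    rw [Set.mem_univ_pi]
    exact fun i => hp.1 i
  obtain ⟨p1, hp1S, hp1max⟩ := hScompact.exists_isMaxOn ⟨q0, hq0S⟩ hFcont.continuousOn
  have hp1max' : ∀ p ∈ Sset, F p ≤ F p1 := fun p hp => hp1max hp
  set S2 : Set (ℕ → ℝ) := Sset ∩ {p | F p = F p1} with hS2
  have hS2compact : IsCompact S2 :=
    hScompact.inter_right (isClosed_eq hFcont continuous_const)
  set G : (ℕ → ℝ) → ℝ := fun p => ∑ i ∈ s, (p i)^2 with hG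
  have hGcont : Continuous G :=
    continuous_finset_sum s fun i _ => (continuous_apply i).pow 2
  obtain ⟨p2, hp2S2, hp2max⟩ := hS2compact.exists_isMaxOn ⟨p1, hp1S, rfl⟩
    hGcont.continuousOn
  have hp2max' : ∀ p ∈ S2, G p ≤ G p2 := fun p hp => hp2max hp
  have hp2S : p2 ∈ Sset := hp2S2.1
  have hFp2 : F p2 = F p1 := hp2S2.2
  -- no bad pair
  have hsame : ∀ i ∈ s, ∀ j ∈ s, i ≠ j → p2 i ∈ Set.Ioo (0:ℝ) 1
      → p2 j ∈ Set.Ioo (0:ℝ) 1 → p2 i = p2 j := by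
    intro i hi j hj hij hio hjo
    by_contra hne
    obtain ⟨u, B, hAff⟩ := exists_affine (q := p2) hi hj hij K
    set s0 := p2 i + p2 j with hs0
    set Q : ℝ → (ℕ → ℝ) := fun x =>
      Function.update (Function.update p2 i x) j (s0 - x) with hQdef
    have hQi : ∀ x, Q x i = x := by
      intro x
      show Function.update (Function.update p2 i x) j (s0 - x) i = x
      rw [Function.update_of_ne hij, Function.update_self]
    have hQj : ∀ x, Q x j = s0 - x := by
      intro x
      show Function.update (Function.update p2 i x) j (s0 - x) j = s0 - x
      rw [Function.update_self]
    have hQval : ∀ x l, l ≠ i → l ≠ j → Q x l = p2 l := by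
      intro x l hli hlj
      show Function.update (Function.update p2 i x) j (s0 - x) l = p2 l
      rw [Function.update_of_ne hlj, Function.update_of_ne hli]
    have hQa : Q (p2 i) = p2 := by
      funext l
      rcases eq_or_ne l i with rfl | hli
      · rw [hQi]
      · rcases eq_or_ne l j with rfl | hlj
        · rw [hQj, hs0]; ring
        · exact hQval _ l hli hlj
    have hFQ : ∀ x, F (Q x) = u + B * (x * (s0 - x)) := fun x => hAff x
    have hQmem : ∀ x, 0 ≤ x → x ≤ 1 → 0 ≤ s0 - x → s0 - x ≤ 1 → Q x ∈ Sset := by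
      intro x h1 h2 h3 h4
      refine ⟨fun l => ?_, fun l hl => ?_, ?_⟩
      · rcases eq_or_ne l i with rfl | hli
        · rw [hQi]; exact ⟨h1, h2⟩
        · rcases eq_or_ne l j with rfl | hlj
          · rw [hQj]; exact ⟨h3, h4⟩
          · rw [hQval x l hli hlj]; exact hp2S.1 l
      · have hli : l ≠ i := fun h => hl (h ▸ hi)
        have hlj : l ≠ j := fun h => hl (h ▸ hj)
        rw [hQval x l hli hlj]
        exact hp2S.2.1 l hl
      · rw [sum_two hi hj hij (Q x), hQi, hQj]
        have hrest : ∑ l ∈ (s.erase i).erase j, Q x l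
            = ∑ l ∈ (s.erase i).erase j, p2 l := by
          refine Finset.sum_congr rfl fun l hl => ?_
          have hlj : l ≠ j := (Finset.mem_erase.mp hl).1
          have hli : l ≠ i := (Finset.mem_erase.mp (Finset.mem_erase.mp hl).2).1
          exact hQval x l hli hlj
        rw [hrest]
        have hold := hp2S.2.2
        rw [sum_two hi hj hij p2] at hold
        rw [hs0]
        linarith [hold]
    have hFp2A : F p2 = u + B * (p2 i * p2 j) := by
      have := hFQ (p2 i)
      rw [hQa] at this
      rw [this, hs0]
      ring_nf
    have hab : 0 < p2 i := hio.1
    have hab2 : p2 i < 1 := hio.2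
    have hbb : 0 < p2 j := hjo.1
    have hbb2 : p2 j < 1 := hjo.2
    have hs0pos : 0 < s0 := by rw [hs0]; linarith
    have hs0lt2 : s0 < 2 := by rw [hs0]; linarith
    set xh := min 1 s0 with hxh
    have hxh1 : 0 ≤ xh := le_min (by norm_num) hs0pos.le
    have hxh2 : xh ≤ 1 := min_le_left _ _
    have hxh3 : 0 ≤ s0 - xh := by
      have := min_le_right 1 s0
      linarith
    have hxh4 : s0 - xh ≤ 1 := by
      rcases le_total s0 1 with h | h
      · rw [hxh, min_eq_right h]; linarith
      · rw [hxh, min_eq_left h]; linarith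
    have hπh : xh * (s0 - xh) < p2 i * p2 j := by
      rcases le_total s0 1 with h | h
      · rw [hxh, min_eq_right h]
        simp only [sub_self, mul_zero]
        positivity
      · rw [hxh, min_eq_left h]
        have h1 : (1 - p2 i) * (1 - p2 j) > 0 := by nlinarith
        rw [hs0]
        nlinarith
    have hπm : p2 i * p2 j < (s0/2) * (s0 - s0/2) := by
      have h2 : (p2 i - p2 j)^2 > 0 := by
        have : p2 i - p2 j ≠ 0 := fun h => hne (by linarith [sub_eq_zero.mp h])
        positivity
      rw [hs0]
      nlinarith
    rcases lt_trichotomy B 0 with hB | hB | hB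
    · have hmem := hQmem xh hxh1 hxh2 hxh3 hxh4
      have hgt : F (Q xh) > F p2 := by
        rw [hFQ, hFp2A]
        have h2 := mul_lt_mul_of_neg_left hπh hB
        linarith
      have := hp1max' _ hmem
      rw [← hFp2] at this
      linarith
    · have hmem := hQmem xh hxh1 hxh2 hxh3 hxh4
      have hFeq : F (Q xh) = F p2 := by rw [hFQ, hFp2A, hB]; ring
      have hQS2 : Q xh ∈ S2 := ⟨hmem, by show F (Q xh) = F p1; rw [hFeq, hFp2]⟩
      have hGle : G (Q xh) ≤ G p2 := hp2max' _ hQS2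
      have hGgt : G (Q xh) > G p2 := by
        have e1 : G (Q xh) = (Q xh i)^2 + (Q xh j)^2
            + ∑ l ∈ (s.erase i).erase j, (Q xh l)^2 :=
          sum_two hi hj hij (fun l => (Q xh l)^2)
        have e2 : G p2 = (p2 i)^2 + (p2 j)^2
            + ∑ l ∈ (s.erase i).erase j, (p2 l)^2 :=
          sum_two hi hj hij (fun l => (p2 l)^2)
        have hrest : ∑ l ∈ (s.erase i).erase j, (Q xh l)^2
            = ∑ l ∈ (s.erase i).erase j, (p2 l)^2 := by
          refine Finset.sum_congr rfl fun l hl => ?_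
          have hlj : l ≠ j := (Finset.mem_erase.mp hl).1
          have hli : l ≠ i := (Finset.mem_erase.mp (Finset.mem_erase.mp hl).2).1
          rw [hQval xh l hli hlj]
        rw [e1, e2, hrest, hQi, hQj]
        have key : xh^2 + (s0-xh)^2 - (p2 i)^2 - (p2 j)^2
            = 2*(p2 i * p2 j - xh*(s0-xh)) := by
          rw [hs0]; ring
        linarith [key, hπh]
      linarith
    · have hmem := hQmem (s0/2) (by linarith) (by linarith) (by linarith) (by linarith)
      have hgt : F (Q (s0/2)) > F p2 := by
        rw [hFQ, hFp2A]
        have h2 := mul_lt_mul_of_pos_left hπm hB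
        linarith
      have := hp1max' _ hmem
      rw [← hFp2] at this
      linarith
  -- structure of p2
  set C1 := s.filter (fun l => p2 l = 1) with hC1
  set R := s.filter (fun l => ¬ p2 l = 1) with hRd
  set Z := R.filter (fun l => p2 l = 0) with hZd
  set I := R.filter (fun l => ¬ p2 l = 0) with hId
  have hIs : ∀ l ∈ I, l ∈ s := by
    intro l hl
    exact (Finset.mem_filter.mp (Finset.mem_filter.mp hl).1).1
  have hIoo : ∀ l ∈ I, p2 l ∈ Set.Ioo (0:ℝ) 1 := by
    intro l hl
    have hlR := (Finset.mem_filter.mp hl).1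
    have h0 : ¬ p2 l = 0 := (Finset.mem_filter.mp hl).2
    have h1 : ¬ p2 l = 1 := (Finset.mem_filter.mp hlR).2
    have hIcc := hp2S.1 l
    exact ⟨lt_of_le_of_ne hIcc.1 (Ne.symm h0), lt_of_le_of_ne hIcc.2 h1⟩
  have hprod : pbp s p2 = (∏ l ∈ C1, (C (1 - p2 l) + C (p2 l) * X))
      * ((∏ l ∈ Z, (C (1 - p2 l) + C (p2 l) * X))
        * (∏ l ∈ I, (C (1 - p2 l) + C (p2 l) * X))) := by
    unfold pbp
    rw [← Finset.prod_filter_mul_prod_filter_not s (fun l => p2 l = 1)]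
    rw [← Finset.prod_filter_mul_prod_filter_not R (fun l => p2 l = 0)]
  have hXc : (∏ l ∈ C1, (C (1 - p2 l) + C (p2 l) * X)) = X ^ C1.card := by
    rw [Finset.prod_congr rfl (fun l hl => ?_), Finset.prod_const]
    have : p2 l = 1 := (Finset.mem_filter.mp hl).2
    rw [this]
    simp
  have hZ1 : (∏ l ∈ Z, (C (1 - p2 l) + C (p2 l) * X)) = 1 := by
    rw [Finset.prod_congr rfl (fun l hl => ?_), Finset.prod_const, one_pow]
    have : p2 l = 0 := (Finset.mem_filter.mp hl).2
    rw [this]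
    simp
  have hsumdec : (K:ℝ) = C1.card + ∑ l ∈ I, p2 l := by
    have h0 := hp2S.2.2
    rw [← Finset.sum_filter_add_sum_filter_not s (fun l => p2 l = 1) p2] at h0
    rw [← Finset.sum_filter_add_sum_filter_not R (fun l => p2 l = 0) p2] at h0
    have e1 : ∑ l ∈ C1, p2 l = (C1.card : ℝ) := by
      rw [Finset.sum_congr rfl (fun l hl => (Finset.mem_filter.mp hl).2),
        Finset.sum_const, nsmul_eq_mul, mul_one]
    have e2 : ∑ l ∈ Z, p2 l = 0 := by
      rw [Finset.sum_congr rfl (fun l hl => (Finset.mem_filter.mp hl).2),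
        Finset.sum_const, smul_zero]
    rw [e1, e2] at h0
    linarith
  have hFp2neg : F p2 < 0 := by
    rcases Finset.eq_empty_or_nonempty I with hIe | ⟨i0, hi0⟩
    · -- all coordinates 0/1
      have hcK : C1.card = K := by
        have : (K:ℝ) = C1.card := by
          rw [hsumdec, hIe]
          simp
        exact_mod_cast this.symm
      have hpoly : pbp s p2 = X ^ K := by
        rw [hprod, hXc, hZ1, hIe]
        simp [hcK]
      show pb s p2 (K+1) - pb s p2 K < 0
      unfold pb
      rw [hpoly, Polynomial.coeff_X_pow, Polynomial.coeff_X_pow]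
      rw [if_neg (by omega), if_pos rfl]
      norm_num
    · -- interior block with common value x
      set x := p2 i0 with hx
      have hxo : x ∈ Set.Ioo (0:ℝ) 1 := hIoo i0 hi0
      have hIval : ∀ l ∈ I, p2 l = x := by
        intro l hl
        rcases eq_or_ne l i0 with rfl | hne
        · rfl
        · exact hsame l (hIs l hl) i0 (hIs i0 hi0) hne (hIoo l hl) hxo
      set r := I.card with hr
      set c := C1.card with hc
      have hrpos : 0 < r := Finset.card_pos.mpr ⟨i0, hi0⟩
      have hIone : (∏ l ∈ I, (C (1 - p2 l) + C (p2 l) * X))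
          = (C (1-x) + C x * X) ^ r := by
        rw [Finset.prod_congr rfl (fun l hl => by rw [hIval l hl]), Finset.prod_const]
      have hpoly : pbp s p2 = (C (1-x) + C x * X) ^ r * X ^ c := by
        rw [hprod, hXc, hZ1, hIone]
        ring
      have hsumI : ∑ l ∈ I, p2 l = (r:ℝ) * x := by
        rw [Finset.sum_congr rfl hIval, Finset.sum_const, nsmul_eq_mul]
      have hcrx : (K:ℝ) = c + r * x := by rw [hsumdec, hsumI]
      have hcK : c < K := by
        have hx0 : (0:ℝ) < (r:ℝ) * x := by
          have : (0:ℝ) < (r:ℝ) := by exact_mod_cast hrpos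
          exact mul_pos this hxo.1
        have : (c:ℝ) < K := by linarith
        exact_mod_cast this
      set K' := K - c with hK'
      have hK'1 : 1 ≤ K' := by omega
      have hrx : (r:ℝ) * x = (K':ℕ) := by
        have : ((K':ℕ):ℝ) = (K:ℝ) - c := by
          rw [hK']
          push_cast [Nat.cast_sub (le_of_lt hcK)]
          ring
        rw [this, hcrx]
        ring
      have hK'r : K' + 1 ≤ r := by
        have h1 : (K':ℝ) < r := by
          rw [← hrx]
          have : (0:ℝ) < (r:ℝ) := by exact_mod_cast hrpos
          nlinarith [hxo.2]
        have : K' < r := by exact_mod_cast h1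
        omega
      have hpbK : pb s p2 K = (r.choose K' : ℝ) * x^K' * (1-x)^(r-K') := by
        unfold pb
        rw [hpoly, Polynomial.coeff_mul_X_pow', if_pos (le_of_lt hcK)]
        have : K - c = K' := rfl
        rw [this]
        exact coeff_bin hxo.1 r K' (by omega)
      have hpbK1 : pb s p2 (K+1) = (r.choose (K'+1) : ℝ) * x^(K'+1) * (1-x)^(r-(K'+1)) := by
        unfold pb
        rw [hpoly, Polynomial.coeff_mul_X_pow', if_pos (by omega : c ≤ K + 1)]
        have : K + 1 - c = K' + 1 := by omega
        rw [this]
        exact coeff_bin hxo.1 r (K'+1) (by omega)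
      show pb s p2 (K+1) - pb s p2 K < 0
      rw [hpbK, hpbK1]
      have := bin_strict hK'1 hK'r hxo.1 hxo.2 hrx
      linarith
  have hle := hp1max' q0 hq0S
  rw [hFq0] at hle
  rw [hFp2] at hFp2neg
  linarith


lemma darroch' {s : Finset ℕ} {q : ℕ → ℝ} {K : ℕ}
    (hq : ∀ i ∈ s, q i ∈ Set.Icc (0:ℝ) 1) (hsum : ∑ i ∈ s, q i = (K:ℝ))
    (hK1 : 1 ≤ K) (hKc : K ≤ s.card) :
    pb s q (K-1) < pb s q K := by
  set m := s.card with hm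
  have h1 : pb s q K = pb s (fun i => 1 - q i) (m - K) := pb_rev hKc
  have h2 : pb s q (K-1) = pb s (fun i => 1 - q i) (m - (K-1)) := pb_rev (by omega)
  have hqc : ∀ i ∈ s, (1 - q i) ∈ Set.Icc (0:ℝ) 1 := by
    intro i hi
    have := hq i hi
    exact ⟨by linarith [this.2], by linarith [this.1]⟩
  have hsumc : ∑ i ∈ s, (1 - q i) = ((m - K : ℕ):ℝ) := by
    rw [Finset.sum_sub_distrib, Finset.sum_const, hsum]
    push_cast [Nat.cast_sub hKc]
    simp [hm]
  have hd := darroch hqc hsumc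
  have hidx : m - (K-1) = (m - K) + 1 := by omega
  rw [h1, h2, hidx]
  exact hd

lemma pb_peak {s : Finset ℕ} {q : ℕ → ℝ} {K : ℕ}
    (hq : ∀ i ∈ s, q i ∈ Set.Ioo (0:ℝ) 1) (hsum : ∑ i ∈ s, q i = (K:ℝ))
    (hK1 : 1 ≤ K) (hKc : K + 1 ≤ s.card) :
    ∀ j, j ≠ K → pb s q j < pb s q K := by
  have hIcc : ∀ i ∈ s, q i ∈ Set.Icc (0:ℝ) 1 :=
    fun i hi => ⟨(hq i hi).1.le, (hq i hi).2.le⟩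
  have hd1 : pb s q (K+1) < pb s q K := darroch hIcc hsum
  have hd2 : pb s q (K-1) < pb s q K := darroch' hIcc hsum hK1 (by omega)
  have hlc := pb_lc hq
  -- strictly decreasing above K
  have hup : ∀ d, K + d + 1 ≤ s.card → pb s q (K + d + 1) < pb s q (K + d) := by
    intro d
    induction d with
    | zero => intro _; simpa using hd1
    | succ d ih =>
      intro hdc
      have ihd := ih (by omega)
      have hA := hlc (K + d)
      have p0 : 0 < pb s q (K + d) := pb_pos hq (by omega)
      have p1 : 0 < pb s q (K + d + 1) := pb_pos hq (by omega)
      have e1 : K + d + 2 = K + (d+1) + 1 := by omega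
      have e2 : K + d + 1 = K + (d+1) := by omega
      rw [← e1, ← e2]
      nlinarith [hA, ihd, p0, p1]
  have habove : ∀ t, 1 ≤ t → K + t ≤ s.card → pb s q (K + t) < pb s q K := by
    intro t
    induction t with
    | zero => omega
    | succ t ih =>
      intro _ hc
      rcases Nat.eq_zero_or_pos t with rfl | ht
      · simpa using hd1
      · have h1 := hup t (by omega)
        have h2 := ih (by omega) (by omega)
        have e : K + t + 1 = K + (t+1) := by omega
        rw [e] at h1
        linarith
  -- strictly increasing below K
  have hdown : ∀ d, d + 1 ≤ K → pb s q (K - (d+1)) < pb s q (K - d) := by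
    intro d
    induction d with
    | zero => intro _; simpa using hd2
    | succ d ih =>
      intro hdK
      have ihd := ih (by omega)
      set j := K - (d + 2) with hj
      have ej1 : K - (d+1) = j + 1 := by omega
      have ej2 : K - d = j + 2 := by omega
      rw [ej1, ej2] at ihd
      have hA := hlc j
      have p1 : 0 < pb s q (j+1) := pb_pos hq (by omega)
      have p2 : 0 < pb s q (j+2) := pb_pos hq (by omega)
      have : pb s q j < pb s q (j+1) := by nlinarith [hA, ihd, p1, p2]
      rw [ej1]
      exact this
  have hbelow : ∀ t, 1 ≤ t → ∀ j, j + t = K → pb s q j < pb s q K := by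
    intro t
    induction t with
    | zero => omega
    | succ t ih =>
      intro _ j hjt
      rcases Nat.eq_zero_or_pos t with rfl | ht
      · have : j = K - 1 := by omega
        subst this
        simpa using hd2
      · have h1 : pb s q j < pb s q (j+1) := by
          have := hdown (K - j - 1) (by omega)
          have e1 : K - (K - j - 1 + 1) = j := by omega
          have e2 : K - (K - j - 1) = j + 1 := by omega
          rw [e1, e2] at this
          exact this
        have h2 := ih (by omega) (j+1) (by omega)
        linarith
  intro j hjK
  rcases lt_trichotomy j K with h | h | h
  · exact hbelow (K - j) (by omega) j (by omega) 
  · omega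
  · rcases le_or_gt j s.card with hj | hj
    · have := habove (j - K) (by omega) (by omega)
      have e : K + (j - K) = j := by omega
      rw [e] at this
      exact this
    · rw [pb_eq_zero hj]
      exact pb_pos hq (by omega)


lemma Pp_sum (s : ℝ) : ∀ n : ℕ, ∑ k ∈ Finset.range (n+1), Pp s k
    = ∏ j ∈ Finset.Icc 1 n, (1 + C (((j:ℕ):ℝ)^s)⁻¹ * X) := by
  intro n
  induction n with
  | zero => simp [Pp]
  | succ n ih =>
    rw [Finset.sum_range_succ, ih]
    have hPp : Pp s (n+1) = Polynomial.C ((((n + 1 : ℕ)) : ℝ) ^ s)⁻¹ * Polynomial.X *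
        ∑ k ∈ (Finset.range (n + 1)).attach, Pp s k.1 := by
      rw [Pp]
    rw [hPp, Finset.sum_attach (Finset.range (n+1)) (Pp s), ih]
    have hIcc : Finset.Icc 1 (n+1) = insert (n+1) (Finset.Icc 1 n) := by
      ext a
      simp [Finset.mem_Icc, Finset.mem_insert]
      omega
    rw [hIcc, Finset.prod_insert (by simp [Finset.mem_Icc])]
    ring

lemma Pp_eq (s : ℝ) (n : ℕ) (hn : 1 ≤ n) :
    Pp s n = C (((n:ℕ):ℝ)^s)⁻¹ * X *
      ∏ j ∈ Finset.Icc 1 (n-1), (1 + C (((j:ℕ):ℝ)^s)⁻¹ * X) := by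
  obtain ⟨m, rfl⟩ : ∃ m, n = m + 1 := ⟨n - 1, by omega⟩
  have hPp : Pp s (m+1) = Polynomial.C ((((m + 1 : ℕ)) : ℝ) ^ s)⁻¹ * Polynomial.X *
      ∑ k ∈ (Finset.range (m + 1)).attach, Pp s k.1 := by
    rw [Pp]
  rw [hPp, Finset.sum_attach (Finset.range (m+1)) (Pp s), Pp_sum]
  norm_num

lemma factor_eq (s : ℝ) (j : ℕ) (hj : 1 ≤ j) :
    (1 + C (((j:ℕ):ℝ)^s)⁻¹ * X)
      = C (1 + (((j:ℕ):ℝ)^s)⁻¹)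
        * (C (1 - (1 + ((j:ℕ):ℝ)^s)⁻¹) + C ((1 + ((j:ℕ):ℝ)^s)⁻¹) * X) := by
  have hu : (0:ℝ) < ((j:ℕ):ℝ)^s := by
    apply Real.rpow_pos_of_pos
    exact_mod_cast hj
  set u := ((j:ℕ):ℝ)^s with hud
  have h1 : (1:ℝ) + u ≠ 0 := by positivity
  have h2 : u ≠ 0 := ne_of_gt hu
  have e1 : (1 + u⁻¹) * (1 - (1+u)⁻¹) = 1 := by
    field_simp
    ring
  have e2 : (1 + u⁻¹) * (1+u)⁻¹ = u⁻¹ := by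
    field_simp
    ring
  rw [mul_add, ← C_mul, e1, ← mul_assoc, ← C_mul, e2]
  simp

noncomputable def qf (s : ℝ) : ℕ → ℝ := fun j => (1 + ((j:ℕ):ℝ)^s)⁻¹

lemma prod_eq (s : ℝ) (m : ℕ) :
    ∏ j ∈ Finset.Icc 1 m, (1 + C (((j:ℕ):ℝ)^s)⁻¹ * X)
      = C (∏ j ∈ Finset.Icc 1 m, (1 + (((j:ℕ):ℝ)^s)⁻¹))
        * pbp (Finset.Icc 1 m) (qf s) := by
  rw [Finset.prod_congr rfl (fun j hj => factor_eq s j (Finset.mem_Icc.mp hj).1)]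
  rw [Finset.prod_mul_distrib]
  unfold pbp qf
  rw [map_prod]
end PeakAux

open PeakAux in
/-- Peak theorem: if `n ≥ 6`, `s ∈ (0,1)` and `k₀ = 1 + ∑_{k=1}^{n-1} 1/(1+kˢ)` is a
positive integer, then `{A_{n,k}(s)}ₖ` has a peak at `k₀`. -/
theorem peak_theorem (n : ℕ) (hn : 6 ≤ n) (s : ℝ) (hs : s ∈ Set.Ioo (0 : ℝ) 1)
    (k0 : ℕ) (hk0 : 0 < k0)
    (heq : (k0 : ℝ) = 1 + ∑ k ∈ Finset.Icc 1 (n - 1), 1 / (1 + (k : ℝ) ^ s)) :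
    ∀ k : ℕ, k ≤ n → k ≠ k0 → A n k s < A n k0 s := by
  classical
  set m := n - 1 with hm
  set sf := Finset.Icc 1 m with hsf
  have hcard : sf.card = m := by rw [hsf, Nat.card_Icc]; omega
  set q := qf s with hqd
  -- q values in (0, 1/2]
  have hupos : ∀ j : ℕ, 1 ≤ j → (0:ℝ) < ((j:ℕ):ℝ)^s := by
    intro j hj
    apply Real.rpow_pos_of_pos
    exact_mod_cast hj
  have huge1 : ∀ j : ℕ, 1 ≤ j → (1:ℝ) ≤ ((j:ℕ):ℝ)^s := by
    intro j hj
    have h1 : (1:ℝ) ≤ ((j:ℕ):ℝ) := by exact_mod_cast hj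
    calc (1:ℝ) = ((j:ℕ):ℝ)^(0:ℝ) := by rw [Real.rpow_zero]
    _ ≤ ((j:ℕ):ℝ)^s := Real.rpow_le_rpow_of_exponent_le h1 hs.1.le
  have hqIoo : ∀ j ∈ sf, q j ∈ Set.Ioo (0:ℝ) 1 := by
    intro j hj
    have hj1 : 1 ≤ j := (Finset.mem_Icc.mp hj).1
    have := hupos j hj1
    constructor
    · rw [hqd]; unfold qf; positivity
    · rw [hqd]; unfold qf
      rw [inv_lt_one_iff₀]
      right
      linarith
  have hqhalf : ∀ j ∈ sf, q j ≤ 1/2 := by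
    intro j hj
    have hj1 : 1 ≤ j := (Finset.mem_Icc.mp hj).1
    have h1 := huge1 j hj1
    rw [hqd]; unfold qf
    rw [show (1:ℝ)/2 = (2:ℝ)⁻¹ by norm_num]
    apply inv_anti₀ (by norm_num)
    linarith
  -- the sum condition
  have hsumq : ∑ j ∈ sf, q j = (k0:ℝ) - 1 := by
    have hsc : ∑ j ∈ sf, q j = ∑ k ∈ sf, 1/(1 + (k:ℝ)^s) := by
      refine Finset.sum_congr rfl fun j _ => ?_
      rw [hqd]; unfold qf; rw [one_div]
    rw [hsc]
    linarith [heq]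
  -- K and its bounds
  set K := k0 - 1 with hK
  have h1sf : 1 ∈ sf := by
    rw [hsf]
    simp [Finset.mem_Icc]
    omega
  have hsumpos : 0 < ∑ j ∈ sf, q j := by
    apply Finset.sum_pos (fun j hj => (hqIoo j hj).1) ⟨1, h1sf⟩
  have hk02 : 2 ≤ k0 := by
    by_contra h
    have : k0 = 1 := by omega
    rw [this] at hsumq
    norm_num at hsumq
    linarith
  have hK1 : 1 ≤ K := by omega
  have hsumK : ∑ j ∈ sf, q j = (K:ℝ) := by
    rw [hsumq, hK]
    push_cast [Nat.cast_sub (by omega : 1 ≤ k0)]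
    ring
  have hKm : K + 1 ≤ m := by
    have hub : ∑ j ∈ sf, q j ≤ (m:ℝ)/2 := by
      calc ∑ j ∈ sf, q j ≤ ∑ j ∈ sf, (1:ℝ)/2 := Finset.sum_le_sum hqhalf
      _ = (m:ℝ)/2 := by
        rw [Finset.sum_const, hcard, nsmul_eq_mul]
        ring
    have hm5 : 5 ≤ m := by omega
    have : (k0:ℝ) - 1 ≤ (m:ℝ)/2 := by rw [← hsumq]; exact hub
    have hmr : (5:ℝ) ≤ (m:ℝ) := by exact_mod_cast hm5
    have : (k0:ℝ) ≤ (m:ℝ) := by linarith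
    have : k0 ≤ m := by exact_mod_cast this
    omega
  -- rewrite A in terms of pb
  set cP : ℝ := ∏ j ∈ sf, (1 + (((j:ℕ):ℝ)^s)⁻¹) with hcP
  have hcPpos : 0 < cP := by
    rw [hcP]
    apply Finset.prod_pos
    intro j hj
    have := hupos j (Finset.mem_Icc.mp hj).1
    positivity
  set aP : ℝ := (((n:ℕ):ℝ)^s)⁻¹ with haP
  have haPpos : 0 < aP := by
    rw [haP]
    have := hupos n (by omega)
    positivity
  have hPp : Pp s n = C aP * X * (C cP * pbp sf q) := by
    rw [Pp_eq s n (by omega), prod_eq s m]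
  have hA0 : A n 0 s = 0 := by
    unfold A
    rw [hPp, mul_assoc, Polynomial.coeff_C_mul, Polynomial.mul_coeff_zero]
    simp
  have hAk : ∀ k : ℕ, A n (k+1) s = (aP * cP) * pb sf q k := by
    intro k
    unfold A
    rw [hPp]
    have hre : C aP * X * (C cP * pbp sf q) = C aP * (X * (C cP * pbp sf q)) := by ring
    rw [hre, Polynomial.coeff_C_mul, Polynomial.coeff_X_mul, Polynomial.coeff_C_mul]
    unfold pb
    ring
  have hAk0 : A n k0 s = (aP * cP) * pb sf q K := by
    have : k0 = K + 1 := by omega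
    rw [this, hAk K]
  have hpeak := pb_peak hqIoo (by rw [hcard] at *; exact hsumK) hK1 (by omega)
  intro k hkn hkne
  rcases Nat.eq_zero_or_pos k with rfl | hkpos
  · rw [hA0, hAk0]
    have : 0 < pb sf q K := pb_pos hqIoo (by omega)
    positivity
  · obtain ⟨k', rfl⟩ : ∃ k', k = k' + 1 := ⟨k - 1, by omega⟩
    rw [hAk k', hAk0]
    have hk'K : k' ≠ K := by omega
    exact mul_lt_mul_of_pos_left (hpeak k' hk'K) (by positivity)
end

section
/- For every integer n ≥ 6 one has (n+1)/2 − H_n > 1; consequently there exists at least one integer k₀ with H_n < k₀ < (n+1)/2, and for every such integer k₀ there exists a unique s ∈ (0,1) with μ_n(s) = k₀. -/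
open Finset Polynomial MeasureTheory Filter

/-- `μₙ(s) = 1 + ∑_{k=1}^{n-1} 1/(1+kˢ)`. -/
noncomputable def mu (n : ℕ) (s : ℝ) : ℝ :=
  1 + ∑ k ∈ Finset.Icc 1 (n - 1), 1 / (1 + (k : ℝ) ^ s)

/-- The `n`-th harmonic number `Hₙ = ∑_{k=1}^n 1/k`. -/
noncomputable def H (n : ℕ) : ℝ := ∑ k ∈ Finset.Icc 1 n, 1 / (k : ℝ)

lemma H_succ (m : ℕ) : H (m + 1) = H m + 1 / ((m : ℝ) + 1) := by
  rw [H, H, Finset.sum_Icc_succ_top (by omega)]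
  push_cast; ring

lemma H_lt (n : ℕ) (hn : 6 ≤ n) : H n < ((n : ℝ) - 1) / 2 := by
  induction n with
  | zero => omega
  | succ m ih =>
    rcases Nat.lt_or_ge m 6 with h | h
    · have hm : m = 5 := by omega
      subst hm
      have : H 6 = 49 / 20 := by
        simp [H, show Finset.Icc 1 6 = {1, 2, 3, 4, 5, 6} from rfl]
        norm_num
      rw [show (5 : ℕ) + 1 = 6 from rfl, this]; norm_num
    · have hm := ih h
      rw [H_succ]
      have h1 : 1 / ((m : ℝ) + 1) < 1 / 2 := by
        have h6 : (6:ℝ) ≤ m := by exact_mod_cast h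
        rw [div_lt_div_iff₀ (by linarith) (by norm_num)]
        linarith
      push_cast
      linarith

lemma mu_zero (n : ℕ) (hn : 6 ≤ n) : mu n 0 = ((n : ℝ) + 1) / 2 := by
  have h1 : ∀ k ∈ Finset.Icc 1 (n - 1), 1 / (1 + (k : ℝ) ^ (0 : ℝ)) = 1 / 2 := by
    intro k hk
    rw [Real.rpow_zero]; norm_num
  rw [mu, Finset.sum_congr rfl h1, Finset.sum_const, Nat.card_Icc]
  have : ((n - 1 + 1 - 1 : ℕ) : ℝ) = (n : ℝ) - 1 := by
    have : n - 1 + 1 - 1 = n - 1 := rfl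
    rw [this, Nat.cast_sub (by omega)]; norm_num
  rw [nsmul_eq_mul, this]; ring

lemma mu_one (n : ℕ) (hn : 6 ≤ n) : mu n 1 = H n := by
  have h1 : ∀ k ∈ Finset.Icc 1 (n - 1), 1 / (1 + (k : ℝ) ^ (1 : ℝ)) = 1 / ((k + 1 : ℕ) : ℝ) := by
    intro k hk
    rw [Real.rpow_one]; push_cast; ring_nf
  rw [mu, Finset.sum_congr rfl h1]
  have h2 : ∑ k ∈ Finset.Icc 1 (n - 1), 1 / ((k + 1 : ℕ) : ℝ)
      = ∑ k ∈ Finset.Icc 2 n, 1 / (k : ℝ) := by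
    rw [show Finset.Icc 2 n = (Finset.Icc 1 (n - 1)).map (addRightEmbedding 1) by
      rw [Finset.map_add_right_Icc]; congr 1; omega]
    rw [Finset.sum_map]
    rfl
  rw [h2, H]
  rw [show Finset.Icc 1 n = insert 1 (Finset.Icc 2 n) by
    ext x; simp [Finset.mem_Icc, Finset.mem_insert]; omega]
  rw [Finset.sum_insert (by simp)]
  norm_num

lemma mu_continuous (n : ℕ) : Continuous (mu n) := by
  unfold mu
  apply Continuous.add continuous_const
  apply continuous_finset_sum
  intro k hk
  have hk1 : 1 ≤ k := (Finset.mem_Icc.mp hk).1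
  have hkpos : (0 : ℝ) < k := by exact_mod_cast hk1
  have hc : Continuous fun s : ℝ => (k : ℝ) ^ s := by
    rw [continuous_iff_continuousAt]
    intro x
    exact Real.continuousAt_const_rpow (ne_of_gt hkpos)
  apply Continuous.div continuous_const (continuous_const.add hc)
  intro s
  have : (0 : ℝ) ≤ (k : ℝ) ^ s := Real.rpow_nonneg (le_of_lt hkpos) s
  exact (by linarith : (0:ℝ) < 1 + (k:ℝ) ^ s).ne'

lemma mu_strictAnti (n : ℕ) (hn : 6 ≤ n) : StrictAnti (mu n) := by
  intro s1 s2 hs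
  unfold mu
  have h2mem : 2 ∈ Finset.Icc 1 (n - 1) := Finset.mem_Icc.mpr ⟨by omega, by omega⟩
  have key : ∑ k ∈ Finset.Icc 1 (n - 1), 1 / (1 + (k : ℝ) ^ s2)
      < ∑ k ∈ Finset.Icc 1 (n - 1), 1 / (1 + (k : ℝ) ^ s1) := by
    apply Finset.sum_lt_sum
    · intro k hk
      have hk1 : 1 ≤ k := (Finset.mem_Icc.mp hk).1
      have hk1' : (1 : ℝ) ≤ k := by exact_mod_cast hk1
      have hle : (k : ℝ) ^ s1 ≤ (k : ℝ) ^ s2 :=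
        Real.rpow_le_rpow_of_exponent_le hk1' (le_of_lt hs)
      have hpos : (0 : ℝ) < 1 + (k : ℝ) ^ s1 := by
        have := Real.rpow_nonneg (by linarith : (0:ℝ) ≤ k) s1; linarith
      exact one_div_le_one_div_of_le hpos (by linarith)
    · refine ⟨2, h2mem, ?_⟩
      have hlt : (2 : ℝ) ^ s1 < (2 : ℝ) ^ s2 :=
        Real.rpow_lt_rpow_of_exponent_lt (by norm_num) hs
      have hpos : (0 : ℝ) < 1 + (2 : ℝ) ^ s1 := by
        have := Real.rpow_nonneg (by norm_num : (0:ℝ) ≤ 2) s1; linarith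
      push_cast
      exact one_div_lt_one_div_of_lt hpos (by linarith)
  linarith

/-- For `n ≥ 6`, `(n+1)/2 - Hₙ > 1`; hence there is an integer `k₀` with
`Hₙ < k₀ < (n+1)/2`, and each such integer is attained as `μₙ(s) = k₀` for a unique
`s ∈ (0,1)`. -/
theorem integer_between_Hn_and_mean (n : ℕ) (hn : 6 ≤ n) :
    (((n : ℝ) + 1) / 2 - H n > 1) ∧
    (∃ k0 : ℤ, H n < (k0 : ℝ) ∧ (k0 : ℝ) < ((n : ℝ) + 1) / 2) ∧
    (∀ k0 : ℤ, H n < (k0 : ℝ) → (k0 : ℝ) < ((n : ℝ) + 1) / 2 →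
      ∃! s : ℝ, s ∈ Set.Ioo (0 : ℝ) 1 ∧ mu n s = (k0 : ℝ)) := by
  have hgap : ((n : ℝ) + 1) / 2 - H n > 1 := by
    have := H_lt n hn; linarith
  refine ⟨hgap, ?_, ?_⟩
  · refine ⟨⌊H n⌋ + 1, ?_, ?_⟩
    · push_cast; have := Int.floor_le (H n); linarith [Int.lt_floor_add_one (H n)]
    · push_cast; have := Int.floor_le (H n); linarith
  · intro k0 h1 h2
    have hmu0 : mu n 0 = ((n : ℝ) + 1) / 2 := mu_zero n hn
    have hmu1 : mu n 1 = H n := mu_one n hn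
    have hmem : (k0 : ℝ) ∈ Set.Ioo (mu n 1) (mu n 0) := by
      rw [hmu0, hmu1]; exact ⟨h1, h2⟩
    have := intermediate_value_Ioo' (by norm_num : (0:ℝ) ≤ 1)
      (mu_continuous n).continuousOn hmem
    obtain ⟨s, hs, hmus⟩ := this
    refine ⟨s, ⟨hs, hmus⟩, ?_⟩
    intro t ⟨ht, hmut⟩
    exact (mu_strictAnti n hn).injective (by rw [hmus, hmut])
end
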